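/- Let G = (V, E, ends) be a multigraph and let = {(e, v) : e ∈ E, v an endpoint of e} be its set of arrows. Let Ê_G be the quotient of the polynomial algebra MvPolynomial ℚ by the ideal generated by all products X_a · X_b where a = (e, u) and b = (e, w) are arrows with the same underlying edge e (allowing a = b, which gives the squares X_a²). For v ∈ V let y_v ∈ Ê_G be the image of ∑_{(e,u) ∈ Â with u = v} X_{(e,u)}, and let f_G : MvPolynomial V ℚ → Ê_G be the ℚ-algebra homomorphism sending the variable z_v to y_v. Then the kernel of f_G equals the ideal of MvPolynomial V ℚ generated by all monomials ∏_{v∈S} z_v^{a_v}, where S ranges over nonempty subsets of V and (a_v)_{v∈S} ranges over families of nonnegative integers with ∑_{v∈S} a_v = κ_S + 1. -/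

import Mathlib

open Finset MvPolynomial

/-- The degree `κ_S` of a subset `S` of vertices of a multigraph `(V, E, ends)`. -/
def multigraphKappa {V E : Type*} [Fintype E] [DecidableEq V]
    (ends : E → Sym2 V) (S : Finset V) : ℕ :=
  (Finset.univ.filter fun e => ∃ v ∈ S, v ∈ ends e).card

/-- The arrows of a multigraph: pairs `(e, v)` with `v` an endpoint of `e`. -/
def Arrows {V E : Type*} (ends : E → Sym2 V) : Type _ :=
  {p : E × V // p.2 ∈ ends p.1}

/-- The ideal of `MvPolynomial (Arrows ends) ℚ` generated by the products `X a * X b`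
of variables corresponding to arrows `a`, `b` with the same underlying edge
(including squares `X a ^ 2`). -/
noncomputable def arrowIdeal {V E : Type*} (ends : E → Sym2 V) :
    Ideal (MvPolynomial (Arrows ends) ℚ) :=
  Ideal.span {q | ∃ a b : Arrows ends, a.1.1 = b.1.1 ∧ q = X a * X b}

instance {V E : Type*} [Fintype V] [Fintype E] [DecidableEq V] (ends : E → Sym2 V) :
    Fintype (Arrows ends) :=
  Subtype.fintype _

/-- The partial orientation algebra `Ê_G`. -/
def hatE {V E : Type*} (ends : E → Sym2 V) : Type _ :=
  MvPolynomial (Arrows ends) ℚ ⧸ arrowIdeal ends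

noncomputable instance {V E : Type*} (ends : E → Sym2 V) : CommRing (hatE ends) :=
  Ideal.Quotient.commRing _

noncomputable instance {V E : Type*} (ends : E → Sym2 V) :
    Algebra ℚ (hatE ends) :=
  Ideal.Quotient.algebra _

/-- The generator `y_v ∈ Ê_G`: the image of the sum of the variables `X_{(e,u)}`
over all arrows with source `u = v`. -/
noncomputable def yGen {V E : Type*} [Fintype V] [Fintype E] [DecidableEq V]
    (ends : E → Sym2 V) (v : V) : hatE ends :=
  Ideal.Quotient.mk (arrowIdeal ends)
    (∑ a : Arrows ends, if a.1.2 = v then X a else 0)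

/-- The homomorphism `f_G : ℚ[z_v : v ∈ V] → Ê_G`, `z_v ↦ y_v`. -/
noncomputable def fG {V E : Type*} [Fintype V] [Fintype E] [DecidableEq V]
    (ends : E → Sym2 V) : MvPolynomial V ℚ →ₐ[ℚ] hatE ends :=
  MvPolynomial.aeval (yGen ends)

namespace KerFG

set_option linter.unusedSectionVars false

noncomputable local instance (priority := low) instDecEqLocal {α : Type*} : DecidableEq α :=
  Classical.decEq α

variable {V E : Type*} [Fintype V] [Fintype E] [DecidableEq V] (ends : E → Sym2 V)

/-- The weight of an arrow: the indicator of its head vertex. -/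
noncomputable def w : Arrows ends → (V →₀ ℕ) := fun a => Finsupp.single a.1.2 1

/-- The lift of `yGen` to the polynomial ring. -/
noncomputable def Yv (v : V) : MvPolynomial (Arrows ends) ℚ :=
  ∑ a : Arrows ends, if a.1.2 = v then X a else 0

lemma fG_apply (p : MvPolynomial V ℚ) :
    fG ends p = Ideal.Quotient.mk (arrowIdeal ends) (aeval (Yv ends) p) := by
  have h : fG ends = (Ideal.Quotient.mkₐ ℚ (arrowIdeal ends)).comp (aeval (Yv ends)) := by
    rw [MvPolynomial.comp_aeval]
    rfl
  rw [h]; rfl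

lemma mem_ker_iff (p : MvPolynomial V ℚ) :
    p ∈ RingHom.ker (fG ends).toRingHom ↔ aeval (Yv ends) p ∈ arrowIdeal ends := by
  rw [RingHom.mem_ker]
  change fG ends p = 0 ↔ _
  rw [fG_apply]; exact Ideal.Quotient.eq_zero_iff_mem

lemma arrowIdeal_eq :
    arrowIdeal ends = Ideal.span ((fun s => monomial s (1 : ℚ)) ''
      {d : Arrows ends →₀ ℕ | ∃ a b : Arrows ends, a.1.1 = b.1.1 ∧
        d = Finsupp.single a 1 + Finsupp.single b 1}) := by
  unfold arrowIdeal
  congr 1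
  ext q
  constructor
  · rintro ⟨a, b, hab, rfl⟩
    exact ⟨Finsupp.single a 1 + Finsupp.single b 1, ⟨a, b, hab, rfl⟩,
      by rw [X, X, monomial_mul, one_mul]⟩
  · rintro ⟨d, ⟨a, b, hab, rfl⟩, rfl⟩
    exact ⟨a, b, hab, by rw [X, X, monomial_mul, one_mul]⟩

lemma mem_arrowIdeal_iff (q : MvPolynomial (Arrows ends) ℚ) :
    q ∈ arrowIdeal ends ↔ ∀ d ∈ q.support, ∃ a b : Arrows ends,
      a.1.1 = b.1.1 ∧ Finsupp.single a 1 + Finsupp.single b 1 ≤ d := by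
  rw [arrowIdeal_eq, mem_ideal_span_monomial_image]
  constructor
  · intro h d hd
    obtain ⟨si, ⟨a, b, hab, rfl⟩, hle⟩ := h d hd
    exact ⟨a, b, hab, hle⟩
  · intro h d hd
    obtain ⟨a, b, hab, hle⟩ := h d hd
    exact ⟨_, ⟨a, b, hab, rfl⟩, hle⟩


lemma weight_w_apply (d : Arrows ends →₀ ℕ) (u : V) :
    Finsupp.weight (w ends) d u = ∑ a : Arrows ends, (if a.1.2 = u then d a else 0) := by
  rw [Finsupp.weight_apply, Finsupp.sum_fintype _ _ (fun a => by simp)]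
  rw [Finsupp.finset_sum_apply]
  refine Finset.sum_congr rfl fun a _ => ?_
  rw [w]
  simp only [Finsupp.smul_apply, Finsupp.single_apply, smul_eq_mul]
  split_ifs <;> simp

lemma sum_weight_w (d : Arrows ends →₀ ℕ) :
    ∑ u : V, Finsupp.weight (w ends) d u = ∑ a : Arrows ends, d a := by
  simp_rw [weight_w_apply]
  rw [Finset.sum_comm]
  refine Finset.sum_congr rfl fun a _ => ?_
  simp

lemma sum_edgeCount (d : Arrows ends →₀ ℕ) :
    ∑ e : E, (∑ a : Arrows ends, if a.1.1 = e then d a else 0) = ∑ a : Arrows ends, d a := by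
  rw [Finset.sum_comm]
  refine Finset.sum_congr rfl fun a _ => ?_
  simp

lemma isWH_Yv (v : V) :
    IsWeightedHomogeneous (w ends) (Yv ends v) (Finsupp.single v 1) := by
  apply IsWeightedHomogeneous.sum
  intro a _
  by_cases h : a.1.2 = v
  · rw [if_pos h]
    have := isWeightedHomogeneous_X ℚ (w ends) a
    rwa [show w ends a = Finsupp.single v 1 by rw [w, h]] at this
  · rw [if_neg h]
    exact isWeightedHomogeneous_zero ℚ _ _

lemma IsWH_pow {σ M : Type*} [AddCommMonoid M] {w : σ → M} {φ : MvPolynomial σ ℚ} {m : M}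
    (h : IsWeightedHomogeneous w φ m) (k : ℕ) : IsWeightedHomogeneous w (φ ^ k) (k • m) := by
  induction k with
  | zero => simpa using isWeightedHomogeneous_one ℚ w
  | succ n ih => rw [pow_succ, succ_nsmul]; exact ih.mul h

lemma isWH_prodY (S : Finset V) (a : V → ℕ) :
    IsWeightedHomogeneous (w ends) (∏ v ∈ S, Yv ends v ^ a v)
      (∑ v ∈ S, Finsupp.single v (a v)) := by
  apply IsWeightedHomogeneous.prod S _ (fun v => Finsupp.single v (a v))
  intro v hv
  have := IsWH_pow (isWH_Yv ends v) (a v)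
  rwa [Finsupp.smul_single, smul_eq_mul, mul_one] at this

lemma sum_single_apply (S : Finset V) (a : V → ℕ) (u : V) :
    (∑ v ∈ S, Finsupp.single v (a v)) u = if u ∈ S then a u else 0 := by
  rw [Finsupp.finset_sum_apply]
  simp_rw [Finsupp.single_apply]
  exact Finset.sum_ite_eq' S u a

lemma edgeCount_le_one (d : Arrows ends →₀ ℕ)
    (hsf : ∀ a b : Arrows ends, a.1.1 = b.1.1 →
      ¬(Finsupp.single a 1 + Finsupp.single b 1 ≤ d)) (e : E) :
    (∑ a : Arrows ends, if a.1.1 = e then d a else 0) ≤ 1 := by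
  by_contra hc
  push_neg at hc
  set s := (univ : Finset (Arrows ends)).filter (fun a => a.1.1 = e) with hs
  have hsum : (∑ a : Arrows ends, if a.1.1 = e then d a else 0) = ∑ a ∈ s, d a :=
    (Finset.sum_filter _ _).symm
  rw [hsum] at hc
  by_cases h2 : ∃ a ∈ s, 2 ≤ d a
  · obtain ⟨a, ha_s, ha⟩ := h2
    refine hsf a a rfl fun x => ?_
    simp only [Finsupp.add_apply, Finsupp.single_apply]
    split_ifs with h
    · subst h; omega
    · omega
  · push_neg at h2
    have hione : ∑ a ∈ s, d a ≤ (s.filter (fun a => d a ≠ 0)).card := by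
      rw [← Finset.sum_filter_ne_zero s (f := d), Finset.card_eq_sum_ones]
      exact Finset.sum_le_sum fun a ha => by
        have := h2 a (Finset.mem_filter.mp ha).1; omega
    have hcard : 2 ≤ (s.filter (fun a => d a ≠ 0)).card := le_trans hc hione
    obtain ⟨a, ha, b, hb, hab⟩ := Finset.one_lt_card.mp hcard
    have ha1 : 1 ≤ d a := Nat.one_le_iff_ne_zero.mpr (Finset.mem_filter.mp ha).2
    have hb1 : 1 ≤ d b := Nat.one_le_iff_ne_zero.mpr (Finset.mem_filter.mp hb).2
    have hae : a.1.1 = e := (Finset.mem_filter.mp ((Finset.mem_filter.mp ha).1)).2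
    have hbe : b.1.1 = e := (Finset.mem_filter.mp ((Finset.mem_filter.mp hb).1)).2
    refine hsf a b (hae.trans hbe.symm) fun x => ?_
    simp only [Finsupp.add_apply, Finsupp.single_apply]
    split_ifs with hxa hxb hxb
    · exact absurd (hxa.trans hxb.symm) hab
    · subst hxa; omega
    · subst hxb; omega
    · omega


lemma gen_mem_arrowIdeal (S : Finset V) (a : V → ℕ)
    (hsum : ∑ v ∈ S, a v = multigraphKappa ends S + 1) :
    aeval (Yv ends) (∏ v ∈ S, (X v : MvPolynomial V ℚ) ^ a v) ∈ arrowIdeal ends := by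
  rw [map_prod]
  simp_rw [map_pow, aeval_X]
  rw [mem_arrowIdeal_iff]
  intro d hd
  by_contra hcon
  push_neg at hcon
  have hwd : Finsupp.weight (w ends) d = ∑ v ∈ S, Finsupp.single v (a v) :=
    isWH_prodY ends S a (by rwa [MvPolynomial.mem_support_iff] at hd)
  have hhead : ∀ ar : Arrows ends, d ar ≠ 0 → ar.1.2 ∈ S := by
    intro ar har
    by_contra hns
    have h1 : Finsupp.weight (w ends) d ar.1.2 = 0 := by
      rw [hwd, sum_single_apply, if_neg hns]
    rw [weight_w_apply] at h1
    have h2 := (Finset.sum_eq_zero_iff.mp h1) ar (Finset.mem_univ ar)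
    rw [if_pos rfl] at h2
    exact har h2
  have hle1 : ∀ e : E, (∑ ar : Arrows ends, if ar.1.1 = e then d ar else 0) ≤ 1 :=
    edgeCount_le_one ends d hcon
  set F : Finset E := Finset.univ.filter (fun e => ∃ v ∈ S, v ∈ ends e) with hF
  have hzero : ∀ e ∈ (Finset.univ : Finset E), e ∉ F →
      (∑ ar : Arrows ends, if ar.1.1 = e then d ar else 0) = 0 := by
    intro e _ heF
    refine Finset.sum_eq_zero fun ar _ => ?_
    split_ifs with h
    · by_contra hne
      exact heF (Finset.mem_filter.mpr ⟨Finset.mem_univ e, ⟨ar.1.2, hhead ar hne, h ▸ ar.2⟩⟩)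
    · rfl
  have htot : ∑ ar : Arrows ends, d ar = multigraphKappa ends S + 1 := by
    rw [← sum_weight_w]
    calc ∑ u : V, Finsupp.weight (w ends) d u
        = ∑ u : V, if u ∈ S then a u else 0 := by
          refine Finset.sum_congr rfl fun u _ => ?_
          rw [hwd, sum_single_apply]
      _ = ∑ u ∈ S, a u := by rw [Finset.sum_ite_mem, Finset.univ_inter]
      _ = multigraphKappa ends S + 1 := hsum
  have hbound : ∑ ar : Arrows ends, d ar ≤ multigraphKappa ends S := by
    rw [← sum_edgeCount]
    rw [← Finset.sum_subset (Finset.subset_univ F) hzero]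
    calc ∑ e ∈ F, (∑ ar : Arrows ends, if ar.1.1 = e then d ar else 0)
        ≤ ∑ e ∈ F, 1 := Finset.sum_le_sum fun e _ => hle1 e
      _ = F.card := by rw [Finset.sum_const, smul_eq_mul, mul_one]
      _ = multigraphKappa ends S := rfl
  omega


lemma coeff_mul_ge {σ : Type*} {p q : MvPolynomial σ ℚ}
    (hp : ∀ d, 0 ≤ coeff d p) (hq : ∀ d, 0 ≤ coeff d q) (d₁ d₂ : σ →₀ ℕ) :
    coeff d₁ p * coeff d₂ q ≤ coeff (d₁ + d₂) (p * q) := by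
  rw [coeff_mul]
  have hm : (d₁, d₂) ∈ Finset.HasAntidiagonal.antidiagonal (d₁ + d₂) := by
    rw [Finset.HasAntidiagonal.mem_antidiagonal]
  exact Finset.single_le_sum (s := Finset.HasAntidiagonal.antidiagonal (d₁ + d₂))
    (f := fun x => coeff x.1 p * coeff x.2 q)
    (fun x _ => mul_nonneg (hp _) (hq _)) hm

lemma coeff_prod_ge {ι σ : Type*} (s : Finset ι) (h : ι → MvPolynomial σ ℚ)
    (d : ι → (σ →₀ ℕ)) (hn : ∀ i e, 0 ≤ coeff e (h i)) :
    (∀ e, 0 ≤ coeff e (∏ i ∈ s, h i)) ∧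
      (∏ i ∈ s, coeff (d i) (h i)) ≤ coeff (∑ i ∈ s, d i) (∏ i ∈ s, h i) := by
  induction s using Finset.cons_induction with
  | empty =>
    constructor
    · intro e
      rw [Finset.prod_empty, coeff_one]
      split_ifs <;> norm_num
    · rw [Finset.prod_empty, Finset.prod_empty, Finset.sum_empty, coeff_one, if_pos rfl]
  | cons a s ha ih =>
    have h1 : ∀ e, 0 ≤ coeff e (h a * ∏ i ∈ s, h i) := by
      intro e
      rw [coeff_mul]
      exact Finset.sum_nonneg fun x _ => mul_nonneg (hn a _) (ih.1 _)
    rw [Finset.prod_cons, Finset.prod_cons, Finset.sum_cons]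
    refine ⟨h1, ?_⟩
    calc coeff (d a) (h a) * ∏ i ∈ s, coeff (d i) (h i)
        ≤ coeff (d a) (h a) * coeff (∑ i ∈ s, d i) (∏ i ∈ s, h i) := by
          refine mul_le_mul_of_nonneg_left ih.2 (hn a _)
      _ ≤ coeff (d a + ∑ i ∈ s, d i) (h a * ∏ i ∈ s, h i) :=
          coeff_mul_ge (hn a) ih.1 _ _

lemma Yv_coeff_nonneg (v : V) (d : Arrows ends →₀ ℕ) : 0 ≤ coeff d (Yv ends v) := by
  rw [Yv, MvPolynomial.coeff_sum]
  refine Finset.sum_nonneg fun a _ => ?_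
  split_ifs with h
  · rw [coeff_X']
    split_ifs <;> norm_num
  · rw [coeff_zero]

lemma Yv_coeff_single (a : Arrows ends) :
    coeff (Finsupp.single a 1) (Yv ends a.1.2) = 1 := by
  rw [Yv, MvPolynomial.coeff_sum]
  rw [Finset.sum_eq_single a]
  · rw [if_pos rfl, coeff_X, if_pos rfl]
  · intro b _ hb
    split_ifs with h
    · rw [coeff_X', if_neg]
      intro hs
      exact hb (Finsupp.single_left_injective one_ne_zero hs)
    · rfl
  · intro h
    exact absurd (Finset.mem_univ a) h


lemma exists_good_mono (α : V →₀ ℕ)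
    (hgood : ∀ S : Finset V, S.Nonempty → ∑ v ∈ S, α v ≤ multigraphKappa ends S) :
    ∃ m : Arrows ends →₀ ℕ,
      Finsupp.weight (w ends) m = α ∧
      (∀ a b : Arrows ends, a.1.1 = b.1.1 → ¬(Finsupp.single a 1 + Finsupp.single b 1 ≤ m)) ∧
      coeff m (∏ v : V, Yv ends v ^ α v) ≠ 0 := by
  classical
  set t : (Σ v : V, Fin (α v)) → Finset E :=
    fun x => Finset.univ.filter (fun e => x.1 ∈ ends e) with ht
  have hH : ∀ s : Finset (Σ v : V, Fin (α v)), s.card ≤ (s.biUnion t).card := by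
    intro s
    rcases s.eq_empty_or_nonempty with rfl | hne
    · simp
    set S := s.image Sigma.fst with hS
    have hSne : S.Nonempty := hne.image _
    have h1 : s.biUnion t = Finset.univ.filter (fun e => ∃ v ∈ S, v ∈ ends e) := by
      ext e
      simp only [Finset.mem_biUnion, ht, Finset.mem_filter, Finset.mem_univ, true_and, hS,
        Finset.mem_image]
      constructor
      · rintro ⟨x, hx, hxe⟩
        exact ⟨x.1, ⟨x, hx, rfl⟩, hxe⟩
      · rintro ⟨v, ⟨x, hx, rfl⟩, hv⟩
        exact ⟨x, hx, hv⟩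
    have h2 : s.card ≤ ∑ v ∈ S, α v := by
      rw [Finset.card_eq_sum_card_fiberwise
        (fun x hx => Finset.mem_image_of_mem Sigma.fst hx)]
      refine Finset.sum_le_sum fun v _ => ?_
      calc (s.filter fun x => x.1 = v).card
          ≤ (Finset.range (α v)).card := by
            refine Finset.card_le_card_of_injOn (fun x => (x.2 : ℕ)) ?_ ?_
            · intro x hx
              have hx1 : x.1 = v := (Finset.mem_filter.mp hx).2
              rw [Finset.mem_coe, Finset.mem_range]
              exact hx1 ▸ x.2.isLt
            · intro x hx y hy hxy
              have hx1 : x.1 = v := (Finset.mem_filter.mp hx).2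
              have hy1 : y.1 = v := (Finset.mem_filter.mp hy).2
              rcases x with ⟨xv, xi⟩
              rcases y with ⟨yv, yi⟩
              dsimp at hx1 hy1 hxy
              subst hx1; subst hy1
              simpa [Fin.ext_iff] using hxy
          _ = α v := Finset.card_range _
    rw [h1]
    exact h2.trans (hgood S hSne)
  obtain ⟨f, hfinj, hft⟩ := (Finset.all_card_le_biUnion_card_iff_exists_injective t).mp hH
  have hmem : ∀ x : Σ v : V, Fin (α v), x.1 ∈ ends (f x) := by
    intro x
    have h := hft x
    rw [ht] at h
    simpa using h
  set g : (Σ v : V, Fin (α v)) → Arrows ends := fun x => ⟨(f x, x.1), hmem x⟩ with hg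
  have hginj : Function.Injective g := by
    intro x y hxy
    exact hfinj (congrArg (fun a : Arrows ends => a.1.1) hxy)
  set m : Arrows ends →₀ ℕ := ∑ x : Σ v : V, Fin (α v), Finsupp.single (g x) 1 with hm
  have hm_apply : ∀ a : Arrows ends, m a =
      ((Finset.univ : Finset (Σ v : V, Fin (α v))).filter (fun x => g x = a)).card := by
    intro a
    rw [hm, Finsupp.finset_sum_apply, Finset.card_filter]
    exact Finset.sum_congr rfl fun x _ => Finsupp.single_apply
  have hm_le1 : ∀ a, m a ≤ 1 := by
    intro a
    rw [hm_apply]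
    exact Finset.card_le_one.mpr fun x hx y hy =>
      hginj ((Finset.mem_filter.mp hx).2.trans (Finset.mem_filter.mp hy).2.symm)
  have hm_range : ∀ a, m a ≠ 0 → ∃ x, g x = a := by
    intro a hma
    rw [hm_apply] at hma
    obtain ⟨x, hx⟩ := Finset.card_pos.mp (Nat.pos_of_ne_zero hma)
    exact ⟨x, (Finset.mem_filter.mp hx).2⟩
  have hsf : ∀ a b : Arrows ends, a.1.1 = b.1.1 →
      ¬(Finsupp.single a 1 + Finsupp.single b 1 ≤ m) := by
    intro a b hab hle
    have ha := Finsupp.le_def.mp hle a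
    have hb := Finsupp.le_def.mp hle b
    rw [Finsupp.add_apply, Finsupp.single_apply, Finsupp.single_apply] at ha hb
    by_cases hab' : a = b
    · subst hab'
      rw [if_pos rfl] at ha
      have := hm_le1 a
      omega
    · rw [if_pos rfl, if_neg (fun h : b = a => hab' h.symm)] at ha
      rw [if_neg hab', if_pos rfl] at hb
      obtain ⟨x, hx⟩ := hm_range a (by omega)
      obtain ⟨y, hy⟩ := hm_range b (by omega)
      have hfx : f x = a.1.1 := congrArg (fun c : Arrows ends => c.1.1) hx
      have hfy : f y = b.1.1 := congrArg (fun c : Arrows ends => c.1.1) hy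
      have hxy : x = y := hfinj (by rw [hfx, hfy, hab])
      exact hab' (hx ▸ hxy ▸ hy)
  have hw : Finsupp.weight (w ends) m = α := by
    rw [hm, map_sum]
    have h1 : ∀ x : Σ v : V, Fin (α v),
        Finsupp.weight (w ends) (Finsupp.single (g x) 1) = Finsupp.single x.1 1 := by
      intro x
      rw [Finsupp.weight_apply, Finsupp.sum_single_index (by simp), one_smul]
      rfl
    rw [Finset.sum_congr rfl fun x _ => h1 x]
    rw [← Finset.univ_sigma_univ, Finset.sum_sigma]
    have h2 : ∀ v : V, (∑ _i : Fin (α v), Finsupp.single v 1) = Finsupp.single v (α v) := by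
      intro v
      rw [Finset.sum_const, Finset.card_univ, Fintype.card_fin, Finsupp.smul_single,
        smul_eq_mul, mul_one]
    rw [Finset.sum_congr rfl fun v _ => h2 v]
    ext u
    rw [sum_single_apply Finset.univ (fun v => α v) u, if_pos (Finset.mem_univ u)]
  have h1 : ∀ x : Σ v : V, Fin (α v),
      coeff (Finsupp.single (g x) 1) (Yv ends x.1) = 1 :=
    fun x => Yv_coeff_single ends (g x)
  have hprod : (∏ v : V, Yv ends v ^ α v) = ∏ x : Σ v : V, Fin (α v), Yv ends x.1 := by
    rw [← Finset.univ_sigma_univ, Finset.prod_sigma]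
    exact Finset.prod_congr rfl fun v _ => by simp
  have hcoeff := (coeff_prod_ge Finset.univ (fun x : Σ v : V, Fin (α v) => Yv ends x.1)
    (fun x => Finsupp.single (g x) 1) (fun x e => Yv_coeff_nonneg ends x.1 e)).2
  rw [← hm, Finset.prod_congr rfl fun x _ => h1 x, Finset.prod_const_one] at hcoeff
  refine ⟨m, hw, hsf, ?_⟩
  rw [hprod]
  intro h0
  rw [h0] at hcoeff
  norm_num at hcoeff


lemma isWH_aeval_monomial (β : V →₀ ℕ) (c : ℚ) :
    IsWeightedHomogeneous (w ends) (aeval (Yv ends) (monomial β c)) β := by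
  rw [aeval_monomial, algebraMap_eq]
  have hp := isWH_prodY ends β.support (fun v => β v)
  have hβ : (∑ v ∈ β.support, Finsupp.single v (β v)) = β := by
    conv_rhs => rw [← Finsupp.sum_single β]
    rfl
  rw [hβ] at hp
  have h := (isWeightedHomogeneous_C (w ends) c).mul hp
  rw [zero_add] at h
  exact h

lemma coeff_aeval (p : MvPolynomial V ℚ) (α : V →₀ ℕ) (m : Arrows ends →₀ ℕ)
    (hwm : Finsupp.weight (w ends) m = α) :
    coeff m (aeval (Yv ends) p) =
      coeff α p * coeff m (∏ v : V, Yv ends v ^ α v) := by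
  conv_lhs => rw [← support_sum_monomial_coeff p]
  rw [map_sum, MvPolynomial.coeff_sum]
  have hs : ∑ β ∈ p.support, coeff m (aeval (Yv ends) (monomial β (coeff β p))) =
      coeff m (aeval (Yv ends) (monomial α (coeff α p))) := by
    refine Finset.sum_eq_single α ?_ ?_
    · intro β _ hβα
      exact (isWH_aeval_monomial ends β _).coeff_eq_zero m (by rw [hwm]; exact Ne.symm hβα)
    · intro hα
      rw [MvPolynomial.notMem_support_iff.mp hα]
      simp
  rw [hs, aeval_monomial, algebraMap_eq, coeff_C_mul,
    Finsupp.prod_fintype _ _ (fun v => pow_zero _)]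

lemma exists_le_sum {f : V → ℕ} {S : Finset V} {n : ℕ} (h : n ≤ ∑ v ∈ S, f v) :
    ∃ g : V → ℕ, (∀ v ∈ S, g v ≤ f v) ∧ ∑ v ∈ S, g v = n := by
  induction n with
  | zero => exact ⟨fun _ => 0, fun v _ => Nat.zero_le _, by simp⟩
  | succ k ih =>
    obtain ⟨g, hgle, hgsum⟩ := ih (Nat.le_of_succ_le h)
    have hlt : ∑ v ∈ S, g v < ∑ v ∈ S, f v := by omega
    have hex : ∃ v ∈ S, g v < f v := by
      by_contra hc
      push_neg at hc
      exact absurd (Finset.sum_le_sum hc) (not_le.mpr hlt)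
    obtain ⟨v, hvS, hvlt⟩ := hex
    refine ⟨fun x => g x + if x = v then 1 else 0, ?_, ?_⟩
    · intro u hu
      dsimp only
      split_ifs with h'
      · have := hgle u hu
        have h2 : g v < f v := hvlt
        rw [h']
        omega
      · have := hgle u hu
        omega
    · dsimp only
      rw [Finset.sum_add_distrib, hgsum, Finset.sum_ite_eq' S v (fun _ => 1), if_pos hvS]

lemma bad_monomial_mem (α : V →₀ ℕ) (c : ℚ) (S : Finset V) (hS : S.Nonempty)
    (hge : multigraphKappa ends S + 1 ≤ ∑ v ∈ S, α v) :
    (monomial α c : MvPolynomial V ℚ) ∈ Ideal.span {m : MvPolynomial V ℚ |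
      ∃ (S : Finset V) (a : V → ℕ), S.Nonempty ∧
        (∑ v ∈ S, a v = multigraphKappa ends S + 1) ∧
        m = ∏ v ∈ S, X v ^ a v} := by
  obtain ⟨a, hale, hasum⟩ := exists_le_sum hge
  set α' : V →₀ ℕ := ∑ v ∈ S, Finsupp.single v (a v) with hα'
  have hα'le : α' ≤ α := by
    rw [Finsupp.le_def]
    intro u
    rw [hα', sum_single_apply]
    split_ifs with h
    · exact hale u h
    · exact Nat.zero_le _
  have hsupp : α'.support ⊆ S := by
    intro u hu
    rw [Finsupp.mem_support_iff] at hu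
    by_contra h
    rw [hα', sum_single_apply, if_neg h] at hu
    exact hu rfl
  have hgen : (monomial α' (1:ℚ)) = ∏ v ∈ S, X v ^ a v := by
    rw [monomial_eq, C_1, one_mul]
    rw [Finsupp.prod_of_support_subset α' hsupp (fun n e => X n ^ e) (fun v _ => pow_zero _)]
    refine Finset.prod_congr rfl fun v hv => ?_
    rw [hα', sum_single_apply, if_pos hv]
  have heq : (monomial α c : MvPolynomial V ℚ) = monomial (α - α') c * monomial α' 1 := by
    rw [monomial_mul, mul_one, tsub_add_cancel_of_le hα'le]
  rw [heq]
  exact Ideal.mul_mem_left _ _ (Ideal.subset_span ⟨S, a, hS, hasum, hgen⟩)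

end KerFG

/-- The kernel of `f_G` is the ideal generated by the monomials
`∏_{v ∈ S} z_v ^ (a v)` with `S` nonempty and `∑_{v ∈ S} a v = κ_S + 1`. -/
theorem ker_fG_eq {V E : Type*} [Fintype V] [Fintype E] [DecidableEq V]
    (ends : E → Sym2 V) :
    RingHom.ker (fG ends).toRingHom =
      Ideal.span {m : MvPolynomial V ℚ |
        ∃ (S : Finset V) (a : V → ℕ), S.Nonempty ∧
          (∑ v ∈ S, a v = multigraphKappa ends S + 1) ∧
          m = ∏ v ∈ S, X v ^ a v} := by
  classical
  apply le_antisymm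
  · intro p hp
    rw [KerFG.mem_ker_iff] at hp
    rw [← support_sum_monomial_coeff p]
    refine Ideal.sum_mem _ fun α hα => ?_
    by_cases hbad : ∃ S : Finset V, S.Nonempty ∧ multigraphKappa ends S + 1 ≤ ∑ v ∈ S, α v
    · obtain ⟨S, hS, hge⟩ := hbad
      exact KerFG.bad_monomial_mem ends α (coeff α p) S hS hge
    · push_neg at hbad
      have hgood : ∀ S : Finset V, S.Nonempty → ∑ v ∈ S, α v ≤ multigraphKappa ends S :=
        fun S hS => by have := hbad S hS; omega
      obtain ⟨m, hwm, hsf, hcoeff⟩ := KerFG.exists_good_mono ends α hgood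
      have hzero : coeff m (aeval (KerFG.Yv ends) p) = 0 := by
        by_contra h
        obtain ⟨a, b, hab, hle⟩ := (KerFG.mem_arrowIdeal_iff ends _).mp hp m
          (MvPolynomial.mem_support_iff.mpr h)
        exact hsf a b hab hle
      rw [KerFG.coeff_aeval ends p α m hwm] at hzero
      have hc0 : coeff α p = 0 := by
        rcases mul_eq_zero.mp hzero with h | h
        · exact h
        · exact absurd h hcoeff
      rw [hc0, map_zero]
      exact Ideal.zero_mem _
  · rw [Ideal.span_le]
    rintro q ⟨S, a, hS, hsum, rfl⟩
    rw [SetLike.mem_coe, KerFG.mem_ker_iff]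
    exact KerFG.gen_mem_arrowIdeal ends S a hsum
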